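/- Let W = W(1,(l)) be the Witt algebra over a field of characteristic 2 with l ≥ 2. Then the derived subalgebra W' is a simple Lie algebra of dimension 2^l - 1. -/

import Mathlib

private lemma witt_odd (l : ℕ) : ∀ i, i ≤ 2 ^ l - 1 → Nat.choose (2 ^ l - 1) i % 2 = 1 := by
  induction l with
  | zero =>
    intro i hi
    norm_num at hi
    subst hi
    decide
  | succ l ih =>
    intro i hi
    haveI hfact : Fact (Nat.Prime 2) := ⟨Nat.prime_two⟩
    have hp : 0 < 2 ^ l := pow_pos (by norm_num) l
    have hpow : 2 ^ (l + 1) = 2 * 2 ^ l := by rw [pow_succ, mul_comm]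
    have h : Nat.choose (2 ^ (l + 1) - 1) i % 2 =
        (Nat.choose ((2 ^ (l + 1) - 1) % 2) (i % 2) *
          Nat.choose ((2 ^ (l + 1) - 1) / 2) (i / 2)) % 2 :=
      Choose.choose_modEq_choose_mod_mul_choose_div_nat
    have e1 : (2 ^ (l + 1) - 1) % 2 = 1 := by omega
    have e2 : (2 ^ (l + 1) - 1) / 2 = 2 ^ l - 1 := by omega
    have e3 : Nat.choose 1 (i % 2) = 1 := by
      rcases Nat.mod_two_eq_zero_or_one i with h' | h' <;> simp [h']
    have e4 : i / 2 ≤ 2 ^ l - 1 := by omega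
    rw [e1, e2, e3, one_mul, ih _ e4] at h
    omega

private lemma witt_mid (l : ℕ) (hl : 2 ≤ l) : Nat.choose (2 ^ l - 2) 2 % 2 = 1 := by
  haveI hfact : Fact (Nat.Prime 2) := ⟨Nat.prime_two⟩
  have h1 : 2 ^ l = 2 * 2 ^ (l - 1) := by
    conv_lhs => rw [show l = (l - 1) + 1 by omega]
    rw [pow_succ, mul_comm]
  have h2 : 2 ^ (l - 1) = 2 * 2 ^ (l - 2) := by
    conv_lhs => rw [show l - 1 = (l - 2) + 1 by omega]
    rw [pow_succ, mul_comm]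
  have hp : 0 < 2 ^ (l - 2) := pow_pos (by norm_num) _
  have h : Nat.choose (2 ^ l - 2) 2 % 2 =
      (Nat.choose ((2 ^ l - 2) % 2) (2 % 2) * Nat.choose ((2 ^ l - 2) / 2) (2 / 2)) % 2 :=
    Choose.choose_modEq_choose_mod_mul_choose_div_nat
  have e1 : (2 ^ l - 2) % 2 = 0 := by omega
  have e2 : (2 ^ l - 2) / 2 = 2 ^ (l - 1) - 1 := by omega
  rw [e1, e2, Nat.choose_self, Nat.choose_one_right, one_mul] at h
  omega

private lemma cast_mod_two {F : Type*} [Field F] [CharP F 2] (k : ℕ) :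
    (k : F) = ((k % 2 : ℕ) : F) := by
  have h2 : (2 : F) = 0 := by exact_mod_cast CharP.cast_eq_zero F 2
  conv_lhs => rw [← Nat.div_add_mod k 2]
  push_cast
  rw [h2]
  ring

/-- For the Witt algebra `W = W(1,(l))` over a field of characteristic 2
with `l ≥ 2`, the derived subalgebra `W' = [W,W]` is a simple Lie algebra of
dimension `2^l - 1`. -/
theorem witt_derived_simple
    (F : Type*) [Field F] [CharP F 2] (l : ℕ) (hl : 2 ≤ l)
    (L : Type*) [LieRing L] [LieAlgebra F L]
    (a : ℕ → L) (b : Module.Basis (Fin (2 ^ l)) F L)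
    (hb : ∀ i : Fin (2 ^ l), b i = a i)
    (ha0 : ∀ k, 2 ^ l - 1 < k → a k = 0)
    (hbracket : ∀ i j, i ≤ 2 ^ l - 1 → j ≤ 2 ^ l - 1 →
      ⁅a i, a j⁆ =
        ((Nat.choose (i + j - 1) i : F) - (Nat.choose (i + j - 1) j : F)) • a (i + j - 1)) :
    LieAlgebra.IsSimple F (LieAlgebra.derivedSeries F L 1) ∧
      Module.finrank F (LieAlgebra.derivedSeries F L 1) = 2 ^ l - 1 := by
  classical
  have hn : 4 ≤ 2 ^ l := by
    calc (4 : ℕ) = 2 ^ 2 := by norm_num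
    _ ≤ 2 ^ l := Nat.pow_le_pow_right (by norm_num) hl
  have hev : 2 ^ l = 2 * 2 ^ (l - 1) := by
    conv_lhs => rw [show l = (l - 1) + 1 by omega]
    rw [pow_succ, mul_comm]
  have hone : (-1 : F) = 1 := by
    have h2 : (2 : F) = 0 := by exact_mod_cast CharP.cast_eq_zero F 2
    linear_combination -h2
  have hOdd : ∀ i, i ≤ 2 ^ l - 1 → ((Nat.choose (2 ^ l - 1) i : F)) = 1 := by
    intro i hi
    rw [cast_mod_two, witt_odd l i hi, Nat.cast_one]
  have hbne : ∀ i : Fin (2 ^ l), a (i : ℕ) ≠ 0 := fun i => hb i ▸ b.ne_zero i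
  -- bracket computations
  have hshift : ∀ k, 1 ≤ k → k ≤ 2 ^ l - 1 → ⁅a 0, a k⁆ = a (k - 1) := by
    intro k h1 h2
    rw [hbracket 0 k (by omega) h2, show 0 + k - 1 = k - 1 by omega,
      Nat.choose_zero_right, Nat.choose_eq_zero_of_lt (by omega : k - 1 < k)]
    simp
  have htop : ∀ i j, i ≤ 2 ^ l - 1 → j ≤ 2 ^ l - 1 → i + j = 2 ^ l → ⁅a i, a j⁆ = 0 := by
    intro i j hi hj hij
    rw [hbracket i j hi hj, show i + j - 1 = 2 ^ l - 1 by omega,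
      hOdd i hi, hOdd j hj, sub_self, zero_smul]
  have hup : ∀ j, j + 1 ≤ 2 ^ l - 1 → ⁅a (j + 1), a 0⁆ = a j := by
    intro j hj
    rw [hbracket (j + 1) 0 hj (by omega), show j + 1 + 0 - 1 = j by omega,
      Nat.choose_eq_zero_of_lt (by omega : j < j + 1), Nat.choose_zero_right]
    rw [Nat.cast_zero, Nat.cast_one, zero_sub, hone, one_smul]
  have hmid : ⁅a 2, a (2 ^ l - 3)⁆ = a (2 ^ l - 2) := by
    rw [hbracket 2 (2 ^ l - 3) (by omega) (by omega),
      show 2 + (2 ^ l - 3) - 1 = 2 ^ l - 2 by omega]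
    have hc1 : ((Nat.choose (2 ^ l - 2) 2 : F)) = 1 := by
      rw [cast_mod_two, witt_mid l hl, Nat.cast_one]
    have hsymm : Nat.choose (2 ^ l - 2) (2 ^ l - 3) = 2 ^ l - 2 := by
      rw [show (2 : ℕ) ^ l - 3 = (2 ^ l - 2) - 1 by omega, Nat.choose_symm (by omega),
        Nat.choose_one_right]
    have hc2 : ((Nat.choose (2 ^ l - 2) (2 ^ l - 3) : F)) = 0 := by
      rw [hsymm, cast_mod_two, show (2 ^ l - 2) % 2 = 0 by omega, Nat.cast_zero]
    rw [hc1, hc2, sub_zero, one_smul]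
  -- the span S
  set S : Submodule F L :=
    Submodule.span F (Set.range fun i : Fin (2 ^ l - 1) => a (i : ℕ)) with hS
  have memS : ∀ k, k ≤ 2 ^ l - 2 → a k ∈ S := by
    intro k hk
    exact Submodule.subset_span ⟨⟨k, by omega⟩, rfl⟩
  have hLtop : ∀ z : L, z ∈ Submodule.span F (Set.range b) := by
    rw [b.span_eq]; intro z; trivial
  have key : ∀ i j : ℕ, i ≤ 2 ^ l - 1 → j ≤ 2 ^ l - 1 → ⁅a i, a j⁆ ∈ S := by
    intro i j hi hj
    by_cases hz : i = 0 ∧ j = 0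
    · rw [hz.1, hz.2, lie_self]
      exact S.zero_mem
    · by_cases htp : i + j = 2 ^ l
      · rw [htop i j hi hj htp]; exact S.zero_mem
      · rw [hbracket i j hi hj]
        apply Submodule.smul_mem
        by_cases hsm : i + j - 1 ≤ 2 ^ l - 2
        · exact memS _ hsm
        · rw [ha0 _ (by omega)]; exact S.zero_mem
  have hbr_mem : ∀ x y : L, ⁅x, y⁆ ∈ S := by
    have inner : ∀ (i : Fin (2 ^ l)) (y : L), ⁅b i, y⁆ ∈ S := by
      intro i y
      refine Submodule.span_induction (p := fun y _ => ⁅b i, y⁆ ∈ S) ?_ ?_ ?_ ?_ (hLtop y)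
      · rintro _ ⟨j, rfl⟩
        rw [hb i, hb j]
        exact key i j (by have := i.isLt; omega) (by have := j.isLt; omega)
      · show ⁅b i, (0 : L)⁆ ∈ S
        rw [lie_zero]; exact S.zero_mem
      · intro u w _ _ hu hw
        show ⁅b i, u + w⁆ ∈ S
        rw [lie_add]; exact S.add_mem hu hw
      · intro t u _ hu
        show ⁅b i, t • u⁆ ∈ S
        rw [lie_smul]; exact S.smul_mem t hu
    intro x y
    refine Submodule.span_induction (p := fun x _ => ⁅x, y⁆ ∈ S) ?_ ?_ ?_ ?_ (hLtop x)
    · rintro _ ⟨i, rfl⟩; exact inner i y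
    · show ⁅(0 : L), y⁆ ∈ S
      rw [zero_lie]; exact S.zero_mem
    · intro u w _ _ hu hw
      show ⁅u + w, y⁆ ∈ S
      rw [add_lie]; exact S.add_mem hu hw
    · intro t u _ hu
      show ⁅t • u, y⁆ ∈ S
      rw [smul_lie]; exact S.smul_mem t hu
  set D : LieIdeal F L := LieAlgebra.derivedSeries F L 1 with hDdef
  have hD1 : D = ⁅(⊤ : LieIdeal F L), (⊤ : LieIdeal F L)⁆ := by
    rw [hDdef, LieAlgebra.derivedSeries_def, LieAlgebra.derivedSeriesOfIdeal_succ,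
      LieAlgebra.derivedSeriesOfIdeal_zero]
  have hDS : LieSubmodule.toSubmodule D = S := by
    rw [hD1, LieSubmodule.lieIdeal_oper_eq_linear_span']
    apply le_antisymm
    · rw [Submodule.span_le]
      rintro m ⟨x, -, y, -, rfl⟩
      exact hbr_mem x y
    · rw [hS, Submodule.span_le]
      rintro m ⟨i, rfl⟩
      have hi : (i : ℕ) + 1 ≤ 2 ^ l - 1 := by have := i.isLt; omega
      have hv : a (i : ℕ) = ⁅a 0, a ((i : ℕ) + 1)⁆ := by
        rw [hshift _ (by omega) hi, Nat.add_sub_cancel]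
      exact Submodule.subset_span
        ⟨a 0, LieSubmodule.mem_top _, a ((i : ℕ) + 1), LieSubmodule.mem_top _, hv.symm⟩
  have memD : ∀ k, k ≤ 2 ^ l - 2 → a k ∈ D := by
    intro k hk
    rw [← LieSubmodule.mem_toSubmodule, hDS]
    exact memS k hk
  -- dimension
  have hli : LinearIndependent F (fun i : Fin (2 ^ l - 1) => a (i : ℕ)) := by
    have hcomp : (fun i : Fin (2 ^ l - 1) => a (i : ℕ)) =
        b ∘ (Fin.castLE (by omega) : Fin (2 ^ l - 1) → Fin (2 ^ l)) := by
      funext i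
      simp only [Function.comp_apply, hb, Fin.coe_castLE]
    rw [hcomp]
    exact b.linearIndependent.comp _ (Fin.castLE_injective _)
  have hfr : Module.finrank F S = 2 ^ l - 1 := by
    rw [hS, finrank_span_eq_card hli, Fintype.card_fin]
  have hfr' : Module.finrank F D = 2 ^ l - 1 := by
    rw [← hfr]
    exact LinearEquiv.finrank_eq (LinearEquiv.ofEq _ _ hDS)
  -- shift on coordinates
  have hrepr : ∀ (z : L) (j : Fin (2 ^ l)) (h : (j : ℕ) + 1 < 2 ^ l),
      b.repr ⁅a 0, z⁆ j = b.repr z ⟨(j : ℕ) + 1, h⟩ := by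
    intro z j h
    have hmaps : (Finsupp.lapply j ∘ₗ (b.repr : L →ₗ[F] (Fin (2 ^ l) →₀ F)) ∘ₗ
          (LieAlgebra.ad F L (a 0) : L →ₗ[F] L))
        = (Finsupp.lapply (⟨(j : ℕ) + 1, h⟩ : Fin (2 ^ l)) ∘ₗ
            (b.repr : L →ₗ[F] (Fin (2 ^ l) →₀ F))) := by
      refine b.ext fun i => ?_
      simp only [LinearMap.coe_comp, Function.comp_apply, Finsupp.lapply_apply,
        LinearEquiv.coe_coe, LieHom.coe_toLinearMap, LieAlgebra.ad_apply]
      rcases Nat.eq_zero_or_pos (i : ℕ) with hi0 | hip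
      · have hbi : b i = a 0 := by rw [hb i, hi0]
        rw [Module.Basis.repr_self, Finsupp.single_apply, hbi, lie_self, map_zero,
          Finsupp.zero_apply, if_neg]
        intro he
        have hv := congrArg Fin.val he
        simp only [] at hv
        omega
      · have hi1 : (i : ℕ) ≤ 2 ^ l - 1 := by have := i.isLt; omega
        have hlt' : (i : ℕ) - 1 < 2 ^ l := by have := i.isLt; omega
        have hbi : ⁅a 0, b i⁆ = b ⟨(i : ℕ) - 1, hlt'⟩ := by
          rw [hb i, hshift _ hip hi1]
          exact (hb ⟨(i : ℕ) - 1, hlt'⟩).symm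
        rw [hbi, Module.Basis.repr_self, Module.Basis.repr_self, Finsupp.single_apply, Finsupp.single_apply]
        by_cases hc : (i : ℕ) = (j : ℕ) + 1
        · rw [if_pos (Fin.ext (show (i : ℕ) - 1 = (j : ℕ) by omega)),
            if_pos (Fin.ext (show (i : ℕ) = (j : ℕ) + 1 from hc))]
        · rw [if_neg, if_neg]
          · intro he; exact hc (congrArg Fin.val he)
          · intro he
            have hv := congrArg Fin.val he
            simp only [] at hv
            omega
    exact LinearMap.congr_fun hmaps z
  have hreprtop : ∀ z : L, b.repr ⁅a 0, z⁆ ⟨2 ^ l - 1, by omega⟩ = 0 := by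
    intro z
    have hmaps : (Finsupp.lapply (⟨2 ^ l - 1, by omega⟩ : Fin (2 ^ l)) ∘ₗ
          (b.repr : L →ₗ[F] (Fin (2 ^ l) →₀ F)) ∘ₗ
          (LieAlgebra.ad F L (a 0) : L →ₗ[F] L)) = 0 := by
      refine b.ext fun i => ?_
      simp only [LinearMap.coe_comp, Function.comp_apply, Finsupp.lapply_apply,
        LinearEquiv.coe_coe, LieHom.coe_toLinearMap, LieAlgebra.ad_apply,
        LinearMap.zero_apply]
      rcases Nat.eq_zero_or_pos (i : ℕ) with hi0 | hip
      · have hbi : b i = a 0 := by rw [hb i, hi0]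
        rw [hbi, lie_self, map_zero, Finsupp.zero_apply]
      · have hi1 : (i : ℕ) ≤ 2 ^ l - 1 := by have := i.isLt; omega
        have hlt' : (i : ℕ) - 1 < 2 ^ l := by have := i.isLt; omega
        have hbi : ⁅a 0, b i⁆ = b ⟨(i : ℕ) - 1, hlt'⟩ := by
          rw [hb i, hshift _ hip hi1]
          exact (hb ⟨(i : ℕ) - 1, hlt'⟩).symm
        rw [hbi, Module.Basis.repr_self, Finsupp.single_apply, if_neg]
        intro he
        have hv := congrArg Fin.val he
        simp only [] at hv
        omega
    exact LinearMap.congr_fun hmaps z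
  -- simplicity
  have heqtop : ∀ J : LieIdeal F D, J ≠ ⊥ → J = ⊤ := by
    intro J hJ
    set P : L → Prop := fun z => ∃ hz : z ∈ D, (⟨z, hz⟩ : D) ∈ J with hP
    have Pzero : P 0 := ⟨D.zero_mem, by
      have h0 : (⟨(0 : L), D.zero_mem⟩ : D) = 0 := rfl
      rw [h0]; exact J.zero_mem⟩
    have Padd : ∀ {z w : L}, P z → P w → P (z + w) := by
      rintro z w ⟨hz, hzJ⟩ ⟨hw, hwJ⟩
      refine ⟨D.add_mem hz hw, ?_⟩
      have he : (⟨z + w, D.add_mem hz hw⟩ : D) = ⟨z, hz⟩ + ⟨w, hw⟩ := rfl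
      rw [he]; exact J.add_mem hzJ hwJ
    have Psmul : ∀ (t : F) {z : L}, P z → P (t • z) := by
      rintro t z ⟨hz, hzJ⟩
      refine ⟨D.smul_mem t hz, ?_⟩
      have he : (⟨t • z, D.smul_mem t hz⟩ : D) = t • (⟨z, hz⟩ : D) := rfl
      rw [he]; exact J.smul_mem t hzJ
    have Plie : ∀ {w z : L}, w ∈ D → P z → P ⁅w, z⁆ := by
      rintro w z hw ⟨hz, hzJ⟩
      refine ⟨D.lie_mem hz, ?_⟩
      have he : (⟨⁅w, z⁆, D.lie_mem hz⟩ : D) = ⁅(⟨w, hw⟩ : D), (⟨z, hz⟩ : D)⁆ := rfl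
      rw [he]; exact J.lie_mem hzJ
    obtain ⟨x, hxJ, hxne⟩ : ∃ x : D, x ∈ J ∧ x ≠ 0 := by
      by_contra hcon
      push_neg at hcon
      exact hJ ((LieSubmodule.eq_bot_iff J).mpr fun m hm => hcon m hm)
    have hPx : P (x : L) := by
      refine ⟨x.2, ?_⟩
      have he : (⟨(x : L), x.2⟩ : D) = x := rfl
      rw [he]; exact hxJ
    have hxne' : (x : L) ≠ 0 := fun h => hxne (Subtype.ext h)
    -- base of descent
    have hbase : ∀ z : L, P z → z ≠ 0 →
        (∀ i : Fin (2 ^ l), 0 < (i : ℕ) → b.repr z i = 0) → P (a 0) := by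
      intro z hz hzne hzr
      have hz0 : z = b.repr z ⟨0, by omega⟩ • a 0 := by
        conv_lhs => rw [← b.sum_repr z]
        rw [Finset.sum_eq_single (⟨0, by omega⟩ : Fin (2 ^ l))]
        · congr 1
          exact hb _
        · intro i _ hne
          have hipos : 0 < (i : ℕ) := by
            rcases Nat.eq_zero_or_pos (i : ℕ) with h0 | h0
            · exact absurd (Fin.ext h0) hne
            · exact h0
          rw [hzr i hipos, zero_smul]
        · intro habs; exact absurd (Finset.mem_univ _) habs
      have hcne : b.repr z ⟨0, by omega⟩ ≠ 0 := by
        intro h0; apply hzne; rw [hz0, h0, zero_smul]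
      have h2 := congrArg (fun w : L => (b.repr z ⟨0, by omega⟩)⁻¹ • w) hz0
      rw [smul_smul, inv_mul_cancel₀ hcne, one_smul] at h2
      rw [← h2]
      exact Psmul _ hz
    have hdesc : ∀ m : ℕ, ∀ z : L, P z → z ≠ 0 →
        (∀ i : Fin (2 ^ l), m < (i : ℕ) → b.repr z i = 0) → P (a 0) := by
      intro m
      induction m with
      | zero => exact fun z hz hzne hzr => hbase z hz hzne hzr
      | succ m ih =>
        intro z hz hzne hzr
        have hz' : P ⁅a 0, z⁆ := Plie (memD 0 (by omega)) hz
        by_cases h0 : ⁅a 0, z⁆ = 0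
        · apply hbase z hz hzne
          intro i hipos
          have hlt1 : (i : ℕ) - 1 + 1 < 2 ^ l := by have := i.isLt; omega
          have hlt2 : (i : ℕ) - 1 < 2 ^ l := by have := i.isLt; omega
          have hr := hrepr z ⟨(i : ℕ) - 1, hlt2⟩ hlt1
          rw [h0, map_zero, Finsupp.zero_apply] at hr
          have hieq : (⟨(i : ℕ) - 1 + 1, hlt1⟩ : Fin (2 ^ l)) = i :=
            Fin.ext (show (i : ℕ) - 1 + 1 = (i : ℕ) by omega)
          rw [hieq] at hr
          exact hr.symm
        · apply ih ⁅a 0, z⁆ hz' h0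
          intro i hi
          by_cases hlt : (i : ℕ) + 1 < 2 ^ l
          · rw [hrepr z i hlt]
            exact hzr ⟨(i : ℕ) + 1, hlt⟩ (show m + 1 < (i : ℕ) + 1 by omega)
          · have hieq : i = (⟨2 ^ l - 1, by omega⟩ : Fin (2 ^ l)) :=
              Fin.ext (show (i : ℕ) = 2 ^ l - 1 by have := i.isLt; omega)
            rw [hieq]
            exact hreprtop z
    have hP0 : P (a 0) :=
      hdesc (2 ^ l) (x : L) hPx hxne' (fun i hi => absurd i.isLt (by omega))
    have hPlow : ∀ k, k ≤ 2 ^ l - 3 → P (a k) := by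
      intro k hk
      have h1 : k + 1 ≤ 2 ^ l - 1 := by omega
      rw [← hup k h1]
      exact Plie (memD (k + 1) (by omega)) hP0
    have hPall : ∀ k, k ≤ 2 ^ l - 2 → P (a k) := by
      intro k hk
      rcases Nat.lt_or_ge k (2 ^ l - 2) with hlt | hge
      · exact hPlow k (by omega)
      · rw [show k = 2 ^ l - 2 by omega, ← hmid]
        exact Plie (memD 2 (by omega)) (hPlow (2 ^ l - 3) le_rfl)
    rw [eq_top_iff]
    intro w _
    have hwS : (w : L) ∈ S := by
      rw [← hDS]
      exact w.2
    have hwP : P (w : L) := by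
      refine Submodule.span_induction (p := fun z _ => P z) ?_ Pzero ?_ ?_ hwS
      · rintro _ ⟨i, rfl⟩
        exact hPall (i : ℕ) (by have := i.isLt; omega)
      · intro u v _ _ hu hv; exact Padd hu hv
      · intro t u _ hu; exact Psmul t hu
    obtain ⟨hmem, hJmem⟩ := hwP
    have he : (⟨(w : L), hmem⟩ : D) = w := rfl
    rwa [he] at hJmem
  have hnonab : ¬IsLieAbelian D := by
    intro habs
    have h02 : ⁅a 0, a 2⁆ = a 1 := by
      have := hshift 2 (by omega) (by omega)
      simpa using this
    have hx : a 0 ∈ D := memD 0 (by omega)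
    have hy : a 2 ∈ D := memD 2 (by omega)
    have htriv : ⁅(⟨a 0, hx⟩ : D), (⟨a 2, hy⟩ : D)⁆ = 0 := trivial_lie_zero _ _ _ _
    have hcoe : (↑(⁅(⟨a 0, hx⟩ : D), (⟨a 2, hy⟩ : D)⁆) : L) = ⁅a 0, a 2⁆ := rfl
    rw [htriv] at hcoe
    have h10 : a 1 = 0 := by
      rw [← h02, ← hcoe]
      rfl
    exact hbne ⟨1, by omega⟩ h10
  refine ⟨⟨fun J => ?_, hnonab⟩, hfr'⟩
  by_cases hJ : J = ⊥
  · exact Or.inl hJ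
  · exact Or.inr (heqtop J hJ)
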